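/- arXiv:2310.11751 — 13 statements merged into one kernel-verified Lean document; each statement's English description precedes it below -/
import Mathlib

section
/- Under Equal Allocation, every Nash equilibrium ((d_H*, e_H*), (d_L*, e_L*)) of the joint contribution-and-effort game has zero contributions: d_H* = d_L* = 0. (No incentive contribution at any EA equilibrium.) -/
noncomputable section

/-- Team solution accuracy as a function of the effort profile `(eH, eL) ∈ {0,1}²`. -/
def pT (a : ℝ) (eH eL : ℕ) : ℝ :=
  if eH + eL = 0 then 1 / 2 else if eH + eL = 1 then (2 * a + 1) / 4 else a

/-- A member's payoff in the joint contribution-and-effort game under Equal Allocation: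
valuation `V`, ability `a`, effort cost `c`, own contribution `dSelf`, the other
member's contribution `dOther`, own effort `eSelf`, the other member's effort `eOther`.
Each member receives half of the incentive pool. -/
def UEA (V a c : ℝ) (dSelf dOther : ℝ) (eSelf eOther : ℕ) : ℝ :=
  V * pT a eSelf eOther + (1 / 2) * (dSelf + dOther) - dSelf - c * eSelf

/-- Nash equilibrium of the joint contribution-and-effort game under Equal Allocation:
no member can strictly increase her payoff by unilaterally changing her own
contribution-effort pair `(d_m, e_m)` with `d_m ∈ {0, D}` and `e_m ∈ {0, 1}`. -/
def isNEjointEA (a c D VH VL : ℝ) (dH dL : ℝ) (eH eL : ℕ) : Prop :=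
  (∀ d' e', (d' = 0 ∨ d' = D) → (e' = 0 ∨ e' = 1) →
    UEA VH a c d' dL e' eL ≤ UEA VH a c dH dL eH eL) ∧
  (∀ d' e', (d' = 0 ∨ d' = D) → (e' = 0 ∨ e' = 1) →
    UEA VL a c d' dH e' eH ≤ UEA VL a c dL dH eL eH)

/-- under Equal Allocation, every Nash equilibrium of the joint
contribution-and-effort game has zero contributions. -/
theorem EA_no_contribution_at_equilibrium
    (a c D VH VL : ℝ)
    (ha : 1 / 2 < a ∧ a ≤ 1) (hc : 0 < c) (hD : 0 < D)
    (hVL : 0 < VL) (hV : VL < VH)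
    (dH dL : ℝ) (eH eL : ℕ)
    (hdH : dH = 0 ∨ dH = D) (hdL : dL = 0 ∨ dL = D)
    (heH : eH = 0 ∨ eH = 1) (heL : eL = 0 ∨ eL = 1)
    (hNE : isNEjointEA a c D VH VL dH dL eH eL) :
    dH = 0 ∧ dL = 0 := by
  constructor
  · rcases hdH with h | h
    · exact h
    · exfalso
      have := hNE.1 0 eH (Or.inl rfl) heH
      rw [h] at this
      simp only [UEA] at this
      linarith
  · rcases hdL with h | h
    · exact h
    · exfalso
      have := hNE.2 0 eL (Or.inl rfl) heL
      rw [h] at this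
      simp only [UEA] at this
      linarith
end
end

section
/- Under Equal Allocation, if 0 < c ≤ c_L where c_L = (2a−1)V_L/4, then the profile with d_H = d_L = 0 and e_H = e_L = 1 is a Nash equilibrium of the joint contribution-and-effort game, for every incentive volume D > 0. (Theorem 1, low-cost region.) -/
noncomputable section

/-- Theorem 1, low-cost region: under Equal Allocation, if
`0 < c ≤ c_L = (2a-1)V_L/4`, then `(d_H, d_L) = (0, 0)` together with
`(e_H, e_L) = (1, 1)` is a Nash equilibrium, for every incentive volume `D > 0`. -/
theorem EA_equilibrium_low_cost
    (a c D VH VL : ℝ)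
    (ha : 1 / 2 < a ∧ a ≤ 1) (hc : 0 < c) (hD : 0 < D)
    (hVL : 0 < VL) (hV : VL < VH)
    (hHetero : VH / VL > max ((14 * a - 5) / (6 * a - 1)) ((2 * a + 1) / (3 - 2 * a)))
    (hcL : c ≤ (2 * a - 1) * VL / 4) :
    isNEjointEA a c D VH VL 0 0 1 1 := by
  obtain ⟨ha1, ha2⟩ := ha
  constructor <;>
  · rintro d' e' (rfl | rfl) (rfl | rfl) <;>
    · simp only [UEA, pT] <;> norm_num <;> nlinarith
end
end

section
/- Under Equal Allocation, if c_L < c ≤ c_H where c_L = (2a−1)V_L/4 and c_H = (2a−1)V_H/4, then the profile with d_H = d_L = 0, e_H = 1 and e_L = 0 is a Nash equilibrium of the joint contribution-and-effort game, for every incentive volume D > 0. (Theorem 1, moderate-cost region.) -/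
noncomputable section

/-- Theorem 1, moderate-cost region: under Equal Allocation, if
`c_L < c ≤ c_H` where `c_L = (2a-1)V_L/4` and `c_H = (2a-1)V_H/4`, then
`(d_H, d_L) = (0, 0)` together with `(e_H, e_L) = (1, 0)` is a Nash equilibrium,
for every incentive volume `D > 0`. -/
theorem EA_equilibrium_moderate_cost
    (a c D VH VL : ℝ)
    (ha : 1 / 2 < a ∧ a ≤ 1) (hc : 0 < c) (hD : 0 < D)
    (hVL : 0 < VL) (hV : VL < VH)
    (hHetero : VH / VL > max ((14 * a - 5) / (6 * a - 1)) ((2 * a + 1) / (3 - 2 * a)))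
    (hcL : (2 * a - 1) * VL / 4 < c) (hcH : c ≤ (2 * a - 1) * VH / 4) :
    isNEjointEA a c D VH VL 0 0 1 0 := by
  obtain ⟨ha1, ha2⟩ := ha
  constructor <;> intro d' e' hd he <;>
    rcases hd with rfl | rfl <;> rcases he with rfl | rfl <;>
    simp [UEA, pT] <;> nlinarith
end
end

section
/- Under Equal Allocation, if c > c_H where c_H = (2a−1)V_H/4, then the profile with d_H = d_L = 0 and e_H = e_L = 0 is a Nash equilibrium of the joint contribution-and-effort game, for every incentive volume D > 0. (Theorem 1, high-cost region.) -/
noncomputable section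

/-- Theorem 1, high-cost region: under Equal Allocation, if
`c > c_H = (2a-1)V_H/4`, then `(d_H, d_L) = (0, 0)` together with
`(e_H, e_L) = (0, 0)` is a Nash equilibrium, for every incentive volume `D > 0`. -/
theorem EA_equilibrium_high_cost
    (a c D VH VL : ℝ)
    (ha : 1 / 2 < a ∧ a ≤ 1) (hc : 0 < c) (hD : 0 < D)
    (hVL : 0 < VL) (hV : VL < VH)
    (hHetero : VH / VL > max ((14 * a - 5) / (6 * a - 1)) ((2 * a + 1) / (3 - 2 * a)))
    (hcH : (2 * a - 1) * VH / 4 < c) :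
    isNEjointEA a c D VH VL 0 0 0 0 := by
  obtain ⟨ha1, ha2⟩ := ha
  constructor <;>
  · rintro d' e' (rfl | rfl) (rfl | rfl) <;>
      simp only [UEA, pT] <;> norm_num <;> nlinarith
end
end

section
/- In the effort game under Output Agreement with pooled incentive P ≥ 0, the profile (e_H, e_L) = (1, 1) is a Nash equilibrium if and only if c ≤ c_L + ((2a−1)²/4)·P, where c_L = (2a−1)V_L/4. (Stage-II equilibrium characterization under OA, both exerting effort.) -/
noncomputable section

/-- Each member's expected share of the incentive pool under Output Agreement. -/
def pOA (a : ℝ) (eH eL : ℕ) : ℝ :=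
  if eH = 1 ∧ eL = 1 then (2 * a ^ 2 - 2 * a + 1) / 2 else 1 / 4

/-- Member H's payoff in the effort game under Output Agreement with pooled incentive `P`. -/
def uOAH (a c P VH : ℝ) (eH eL : ℕ) : ℝ :=
  VH * pT a eH eL + pOA a eH eL * P - c * eH

/-- Member L's payoff in the effort game under Output Agreement with pooled incentive `P`. -/
def uOAL (a c P VL : ℝ) (eH eL : ℕ) : ℝ :=
  VL * pT a eH eL + pOA a eH eL * P - c * eL

/-- Nash equilibrium of the effort game under Output Agreement: no member can strictly
increase her payoff by unilaterally changing her own effort in `{0, 1}`. -/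
def isNE_OA (a c P VH VL : ℝ) (eH eL : ℕ) : Prop :=
  (∀ e', e' = 0 ∨ e' = 1 → uOAH a c P VH e' eL ≤ uOAH a c P VH eH eL) ∧
  (∀ e', e' = 0 ∨ e' = 1 → uOAL a c P VL eH e' ≤ uOAL a c P VL eH eL)

/-- under Output Agreement with pooled incentive `P ≥ 0`, the profile
`(e_H, e_L) = (1, 1)` is a Nash equilibrium iff `c ≤ c_L + ((2a-1)²/4)·P`, where
`c_L = (2a-1)V_L/4`. -/
theorem OA_NE_both_effort_iff
    (a c P VH VL : ℝ)
    (ha : 1 / 2 < a ∧ a ≤ 1) (hc : 0 < c) (hP : 0 ≤ P)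
    (hVL : 0 < VL) (hV : VL < VH) :
    isNE_OA a c P VH VL 1 1 ↔
      c ≤ (2 * a - 1) * VL / 4 + ((2 * a - 1) ^ 2 / 4) * P := by
  constructor
  · rintro ⟨hH, hL⟩
    have := hL 0 (Or.inl rfl)
    simp only [uOAL, pT, pOA] at this
    norm_num at this
    nlinarith [this]
  · intro hle
    constructor
    · rintro e' (rfl | rfl)
      · simp only [uOAH, pT, pOA]
        norm_num
        nlinarith [hle, mul_le_mul_of_nonneg_left hV.le (by nlinarith : (0:ℝ) ≤ 2*a-1)]
      · exact le_refl _
    · rintro e' (rfl | rfl)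
      · simp only [uOAL, pT, pOA]
        norm_num
        nlinarith [hle]
      · exact le_refl _
end
end

section
/- In the effort game under Output Agreement with pooled incentive P ≥ 0, the profile (e_H, e_L) = (0, 0) is a Nash equilibrium if and only if c ≥ c_H, where c_H = (2a−1)V_H/4. (Stage-II equilibrium characterization under OA, neither exerting effort.) -/
noncomputable section

/-- under Output Agreement with pooled incentive `P ≥ 0`, the profile
`(e_H, e_L) = (0, 0)` is a Nash equilibrium iff `c ≥ c_H = (2a-1)V_H/4`. -/
theorem OA_NE_no_effort_iff
    (a c P VH VL : ℝ)
    (ha : 1 / 2 < a ∧ a ≤ 1) (hc : 0 < c) (hP : 0 ≤ P)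
    (hVL : 0 < VL) (hV : VL < VH) :
    isNE_OA a c P VH VL 0 0 ↔ (2 * a - 1) * VH / 4 ≤ c := by
  constructor
  · rintro ⟨hH, -⟩
    have := hH 1 (Or.inr rfl)
    simp only [uOAH, pT, pOA] at this
    norm_num at this
    nlinarith
  · intro h
    constructor
    · rintro e' (rfl | rfl)
      · exact le_refl _
      · simp only [uOAH, pT, pOA]; norm_num; nlinarith
    · rintro e' (rfl | rfl)
      · exact le_refl _
      · simp only [uOAL, pT, pOA]; norm_num; nlinarith [ha.1]
end
end

section
/- In the effort game under Output Agreement with pooled incentive P ≥ 0, the profile (e_H, e_L) = (1, 0) is a Nash equilibrium if and only if c_L + ((2a−1)²/4)·P ≤ c ≤ c_H, where c_L = (2a−1)V_L/4 and c_H = (2a−1)V_H/4. (Stage-II equilibrium characterization under OA, only the high-valuation member exerting effort.) -/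
noncomputable section

/-- under Output Agreement with pooled incentive `P ≥ 0`, the profile
`(e_H, e_L) = (1, 0)` is a Nash equilibrium iff
`c_L + ((2a-1)²/4)·P ≤ c ≤ c_H`, where `c_L = (2a-1)V_L/4` and `c_H = (2a-1)V_H/4`. -/
theorem OA_NE_only_H_effort_iff
    (a c P VH VL : ℝ)
    (ha : 1 / 2 < a ∧ a ≤ 1) (hc : 0 < c) (hP : 0 ≤ P)
    (hVL : 0 < VL) (hV : VL < VH) :
    isNE_OA a c P VH VL 1 0 ↔
      ((2 * a - 1) * VL / 4 + ((2 * a - 1) ^ 2 / 4) * P ≤ c ∧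
        c ≤ (2 * a - 1) * VH / 4) := by
  constructor
  · rintro ⟨hH, hL⟩
    have h1 := hH 0 (Or.inl rfl)
    have h2 := hL 1 (Or.inr rfl)
    simp only [uOAH, uOAL, pT, pOA] at h1 h2
    norm_num at h1 h2
    constructor
    · nlinarith [h2]
    · linarith
  · rintro ⟨h1, h2⟩
    constructor
    · rintro e' (rfl | rfl) <;> simp only [uOAH, pT, pOA] <;> norm_num <;> linarith
    · rintro e' (rfl | rfl) <;> simp only [uOAL, pT, pOA] <;> norm_num
      nlinarith [h1]
end
end

section
/- In the effort game under the Shapley Value mechanism with pooled incentive P ≥ 0, the profile (e_H, e_L) = (1, 1) is a Nash equilibrium if and only if c ≤ c_L + P/2, where c_L = (2a−1)V_L/4. (Stage-II equilibrium characterization under SV, both exerting effort.) -/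
noncomputable section

/-- Member H's share of the incentive pool under the Shapley Value mechanism
(with the equal-split convention when neither member exerts effort). -/
def pSVH (eH eL : ℕ) : ℝ :=
  if eH = 1 ∧ eL = 0 then 1 else if eH = 0 ∧ eL = 1 then 0 else 1 / 2

/-- Member L's share of the incentive pool under the Shapley Value mechanism. -/
def pSVL (eH eL : ℕ) : ℝ := 1 - pSVH eH eL

/-- Member H's payoff in the effort game under the Shapley Value mechanism with
pooled incentive `P`. -/
def uSVH (a c P VH : ℝ) (eH eL : ℕ) : ℝ :=
  VH * pT a eH eL + pSVH eH eL * P - c * eH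

/-- Member L's payoff in the effort game under the Shapley Value mechanism with
pooled incentive `P`. -/
def uSVL (a c P VL : ℝ) (eH eL : ℕ) : ℝ :=
  VL * pT a eH eL + pSVL eH eL * P - c * eL

/-- Nash equilibrium of the effort game under the Shapley Value mechanism: no member can
strictly increase her payoff by unilaterally changing her own effort in `{0, 1}`. -/
def isNE_SV (a c P VH VL : ℝ) (eH eL : ℕ) : Prop :=
  (∀ e', e' = 0 ∨ e' = 1 → uSVH a c P VH e' eL ≤ uSVH a c P VH eH eL) ∧
  (∀ e', e' = 0 ∨ e' = 1 → uSVL a c P VL eH e' ≤ uSVL a c P VL eH eL)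

/-- under the Shapley Value mechanism with pooled incentive `P ≥ 0`, the
profile `(e_H, e_L) = (1, 1)` is a Nash equilibrium iff `c ≤ c_L + P/2`, where
`c_L = (2a-1)V_L/4`. -/
theorem SV_NE_both_effort_iff
    (a c P VH VL : ℝ)
    (ha : 1 / 2 < a ∧ a ≤ 1) (hc : 0 < c) (hP : 0 ≤ P)
    (hVL : 0 < VL) (hV : VL < VH) :
    isNE_SV a c P VH VL 1 1 ↔ c ≤ (2 * a - 1) * VL / 4 + P / 2 := by
  constructor
  · intro h
    have := h.2 0 (Or.inl rfl)
    simp [uSVL, pT, pSVL, pSVH] at this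
    linarith
  · intro h
    constructor
    · intro e' he'
      rcases he' with rfl | rfl
      · simp [uSVH, pT, pSVH]
        nlinarith [mul_pos (sub_pos.2 hV) (sub_pos.2 ha.1)]
      · exact le_refl _
    · intro e' he'
      rcases he' with rfl | rfl
      · simp [uSVL, pT, pSVL, pSVH]
        linarith
      · exact le_refl _
end
end

section
/- In the effort game under the Shapley Value mechanism with pooled incentive P ≥ 0, the profile (e_H, e_L) = (1, 0) is a Nash equilibrium if and only if c_L + P/2 ≤ c ≤ c_H + P/2, where c_L = (2a−1)V_L/4 and c_H = (2a−1)V_H/4. (Stage-II equilibrium characterization under SV, only the high-valuation member exerting effort.) -/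
noncomputable section

/-- under the Shapley Value mechanism with pooled incentive `P ≥ 0`, the
profile `(e_H, e_L) = (1, 0)` is a Nash equilibrium iff
`c_L + P/2 ≤ c ≤ c_H + P/2`, where `c_L = (2a-1)V_L/4` and `c_H = (2a-1)V_H/4`. -/
theorem SV_NE_only_H_effort_iff
    (a c P VH VL : ℝ)
    (ha : 1 / 2 < a ∧ a ≤ 1) (hc : 0 < c) (hP : 0 ≤ P)
    (hVL : 0 < VL) (hV : VL < VH) :
    isNE_SV a c P VH VL 1 0 ↔
      ((2 * a - 1) * VL / 4 + P / 2 ≤ c ∧ c ≤ (2 * a - 1) * VH / 4 + P / 2) := by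
  constructor
  · rintro ⟨hH, hL⟩
    have h1 := hH 0 (Or.inl rfl)
    have h2 := hL 1 (Or.inr rfl)
    simp only [isNE_SV, uSVH, uSVL, pT, pSVH, pSVL] at h1 h2
    norm_num at h1 h2
    constructor <;> linarith
  · rintro ⟨h1, h2⟩
    constructor
    · rintro e' (rfl | rfl) <;>
        simp only [uSVH, pT, pSVH] <;> norm_num <;> linarith
    · rintro e' (rfl | rfl) <;>
        simp only [uSVL, pT, pSVH, pSVL] <;> norm_num <;> linarith
end
end

section
/- In the effort game under the Shapley Value mechanism with pooled incentive P ≥ 0, the profile (e_H, e_L) = (0, 0) is a Nash equilibrium if and only if c ≥ c_H + P/2, where c_H = (2a−1)V_H/4. (Stage-II equilibrium characterization under SV, neither exerting effort.) -/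
noncomputable section

/-- under the Shapley Value mechanism with pooled incentive `P ≥ 0`, the
profile `(e_H, e_L) = (0, 0)` is a Nash equilibrium iff `c ≥ c_H + P/2`, where
`c_H = (2a-1)V_H/4`. -/
theorem SV_NE_no_effort_iff
    (a c P VH VL : ℝ)
    (ha : 1 / 2 < a ∧ a ≤ 1) (hc : 0 < c) (hP : 0 ≤ P)
    (hVL : 0 < VL) (hV : VL < VH) :
    isNE_SV a c P VH VL 0 0 ↔ (2 * a - 1) * VH / 4 + P / 2 ≤ c := by
  constructor
  · rintro ⟨hH, -⟩
    have h1 := hH 1 (Or.inr rfl)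
    simp only [uSVH, pT, pSVH] at h1
    norm_num at h1
    linarith
  · intro h
    refine ⟨?_, ?_⟩ <;> rintro e' (rfl | rfl) <;>
      simp only [uSVH, uSVL, pT, pSVH, pSVL] <;> norm_num <;> nlinarith
end
end

section
/- Let the share functions (p_H, p_L) be those of any one of the three mechanisms EA, OA, or SV. Then for every pooled incentive P ≥ 0, no Nash equilibrium (e_H*, e_L*) of the effort game satisfies e_H* = 0 and e_L* = 1; equivalently, every Nash equilibrium satisfies e_H* ≥ e_L*. (Corollary 1: the low-valuation member exerts no more effort than the high-valuation member at equilibrium.) -/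
noncomputable section

/-- Each member's share of the incentive pool under Equal Allocation. -/
def pEA (_eH _eL : ℕ) : ℝ := 1 / 2

/-- Member H's payoff in the effort game with share function `pH` and pool `P`. -/
def uH (pH : ℕ → ℕ → ℝ) (a c P VH : ℝ) (eH eL : ℕ) : ℝ :=
  VH * pT a eH eL + pH eH eL * P - c * eH

/-- Member L's payoff in the effort game with share function `pL` and pool `P`. -/
def uL (pL : ℕ → ℕ → ℝ) (a c P VL : ℝ) (eH eL : ℕ) : ℝ :=
  VL * pT a eH eL + pL eH eL * P - c * eL

/-- Nash equilibrium of the effort game with share functions `(pH, pL)`: no member can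
strictly increase her payoff by unilaterally changing her own effort in `{0, 1}`. -/
def isNE (pH pL : ℕ → ℕ → ℝ) (a c P VH VL : ℝ) (eH eL : ℕ) : Prop :=
  (∀ e', e' = 0 ∨ e' = 1 → uH pH a c P VH e' eL ≤ uH pH a c P VH eH eL) ∧
  (∀ e', e' = 0 ∨ e' = 1 → uL pL a c P VL eH e' ≤ uL pL a c P VL eH eL)

/-- Corollary 1: under each of EA, OA, and SV, for every pooled incentive
`P ≥ 0`, no Nash equilibrium of the effort game has `e_H* = 0` and `e_L* = 1`;
equivalently, every Nash equilibrium satisfies `e_H* ≥ e_L*`. -/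
theorem low_valuation_exerts_no_more_effort
    (a c P VH VL : ℝ)
    (ha : 1 / 2 < a ∧ a ≤ 1) (hc : 0 < c) (hP : 0 ≤ P)
    (hVL : 0 < VL) (hV : VL < VH)
    (pH pL : ℕ → ℕ → ℝ)
    (hmech : (pH = pEA ∧ pL = pEA) ∨ (pH = pOA a ∧ pL = pOA a) ∨
             (pH = pSVH ∧ pL = pSVL))
    (eH eL : ℕ) (heH : eH = 0 ∨ eH = 1) (heL : eL = 0 ∨ eL = 1)
    (hNE : isNE pH pL a c P VH VL eH eL) :
    ¬(eH = 0 ∧ eL = 1) ∧ eL ≤ eH := by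
  have key : ¬(eH = 0 ∧ eL = 1) := by
    rintro ⟨h0, h1⟩
    subst h0; subst h1
    have hA := hNE.1 1 (Or.inr rfl)
    have hB := hNE.2 0 (Or.inl rfl)
    rcases hmech with ⟨hpH, hpL⟩ | ⟨hpH, hpL⟩ | ⟨hpH, hpL⟩ <;> subst hpH <;> subst hpL <;>
      simp [uH, uL, pT, pEA, pOA, pSVH, pSVL] at hA hB <;>
      nlinarith [ha.1, ha.2, mul_nonneg hP (sq_nonneg (2*a-1))]
  refine ⟨key, ?_⟩
  rcases heH with rfl | rfl <;> rcases heL with rfl | rfl <;> simp_all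
end
end

section
/- For every contribution profile (d_H, d_L) ∈ {0, D}² and every effort profile (e_H, e_L) ∈ {0,1}², the social welfare (sum of the two members' payoffs) under the Shapley Value mechanism is at least the social welfare under Output Agreement: W^SV(d, e) − W^OA(d, e) = (1 − (p_H^OA(e) + p_L^OA(e)))·(d_H + d_L) ≥ 0. In particular, the inequality is strict whenever d_H + d_L > 0 and not both (e_H, e_L) = (1,1) with a = 1. -/
noncomputable section

/-- Social welfare under Output Agreement: the sum of the two members' payoffs
`U_m = V_m·P_T(e) + p_m^OA(e)·(d_H + d_L) − d_m − c·e_m`. -/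
def WOA (a c VH VL dH dL : ℝ) (eH eL : ℕ) : ℝ :=
  (VH * pT a eH eL + pOA a eH eL * (dH + dL) - dH - c * eH) +
  (VL * pT a eH eL + pOA a eH eL * (dH + dL) - dL - c * eL)

/-- Social welfare under the Shapley Value mechanism: the sum of the two members' payoffs
`U_m = V_m·P_T(e) + p_m^SV(e)·(d_H + d_L) − d_m − c·e_m`. -/
def WSV (a c VH VL dH dL : ℝ) (eH eL : ℕ) : ℝ :=
  (VH * pT a eH eL + pSVH eH eL * (dH + dL) - dH - c * eH) +
  (VL * pT a eH eL + pSVL eH eL * (dH + dL) - dL - c * eL)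

/-- for every contribution profile in `{0, D}²` and every effort profile
in `{0,1}²`, the social welfare under SV exceeds that under OA by exactly
`(1 − (p_H^OA(e) + p_L^OA(e)))·(d_H + d_L) ≥ 0`, with strict inequality whenever
`d_H + d_L > 0` and it is not the case that both `(e_H, e_L) = (1,1)` and `a = 1`. -/
theorem SV_welfare_dominates_OA
    (a c D VH VL : ℝ)
    (ha : 1 / 2 < a ∧ a ≤ 1) (hc : 0 < c) (hD : 0 < D)
    (hVL : 0 < VL) (hV : VL < VH)
    (dH dL : ℝ) (hdH : dH = 0 ∨ dH = D) (hdL : dL = 0 ∨ dL = D)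
    (eH eL : ℕ) (heH : eH = 0 ∨ eH = 1) (heL : eL = 0 ∨ eL = 1) :
    WSV a c VH VL dH dL eH eL - WOA a c VH VL dH dL eH eL
        = (1 - (pOA a eH eL + pOA a eH eL)) * (dH + dL) ∧
    0 ≤ WSV a c VH VL dH dL eH eL - WOA a c VH VL dH dL eH eL ∧
    (0 < dH + dL → ¬(eH = 1 ∧ eL = 1 ∧ a = 1) →
      0 < WSV a c VH VL dH dL eH eL - WOA a c VH VL dH dL eH eL) := by
  obtain ⟨ha1, ha2⟩ := ha
  have hd : 0 ≤ dH + dL := by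
    rcases hdH with h | h <;> rcases hdL with h' | h' <;> simp [h, h'] <;> linarith
  rcases heH with rfl | rfl <;> rcases heL with rfl | rfl <;>
    simp only [WSV, WOA, pOA, pSVH, pSVL, pT] <;> norm_num <;>
    refine ⟨by ring, ?_, ?_⟩
  · nlinarith
  · intro h1
    nlinarith
  · nlinarith
  · intro h1
    nlinarith
  · nlinarith
  · intro h1
    nlinarith
  · nlinarith [mul_nonneg (mul_nonneg (by linarith : (0:ℝ) ≤ a) (by linarith : (0:ℝ) ≤ 1 - a)) hd]
  · intro h1 h2
    have hlt : a < 1 := lt_of_le_of_ne ha2 (by tauto)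
    nlinarith [mul_pos (mul_pos (by linarith : (0:ℝ) < a) (by linarith : (0:ℝ) < 1 - a)) h1]
end
end

section
/- Suppose a ∈ (1/2, 1], V_H > V_L > 0, D > 0, and the effort cost c satisfies c_H < c ≤ c_H + D/2 and D ≤ min{c_L, 2(c_H − c_L)}, where c_L = (2a−1)V_L/4 and c_H = (2a−1)V_H/4. Then under the Shapley Value mechanism: (i) (e_H, e_L) = (1, 0) is a Nash equilibrium of the effort game with pooled incentive P = D; (ii) (e_H, e_L) = (0, 0) is a Nash equilibrium of the effort game with pooled incentive P = 0; and (iii) member L's total payoff at the outcome where only she contributes D and only H exerts effort, namely V_L·(2a+1)/4 − D, is at least her payoff V_L/2 at the outcome with no contributions and no effort. Hence the low-valuation member can profitably fund the pool to induce the high-valuation member's effort. (Counter-intuitive SV equilibrium of Theorem 3.) -/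
noncomputable section

/-- counter-intuitive SV equilibrium of Theorem 3: if
`c_H < c ≤ c_H + D/2` and `D ≤ min{c_L, 2(c_H − c_L)}`, where `c_L = (2a-1)V_L/4` and
`c_H = (2a-1)V_H/4`, then under the Shapley Value mechanism (i) `(1,0)` is a Nash
equilibrium of the effort game with pool `P = D`, (ii) `(0,0)` is a Nash equilibrium of
the effort game with pool `P = 0`, and (iii) member L's total payoff when only she
contributes `D` and only H exerts effort, `V_L·(2a+1)/4 − D`, is at least her payoff
`V_L/2` at the no-contribution, no-effort outcome. -/
theorem SV_low_valuation_funds_high_valuation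
    (a c D VH VL : ℝ)
    (ha : 1 / 2 < a ∧ a ≤ 1) (hc : 0 < c) (hD : 0 < D)
    (hVL : 0 < VL) (hV : VL < VH)
    (hcH : (2 * a - 1) * VH / 4 < c)
    (hcHD : c ≤ (2 * a - 1) * VH / 4 + D / 2)
    (hDle : D ≤ min ((2 * a - 1) * VL / 4) (2 * ((2 * a - 1) * VH / 4 - (2 * a - 1) * VL / 4))) :
    isNE_SV a c D VH VL 1 0 ∧
    isNE_SV a c 0 VH VL 0 0 ∧
    VL / 2 ≤ VL * (2 * a + 1) / 4 - D := by
  obtain ⟨ha1, ha2⟩ := ha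
  obtain ⟨hD1, hD2⟩ := le_min_iff.mp hDle
  refine ⟨⟨?_, ?_⟩, ⟨?_, ?_⟩, ?_⟩
  · intro e' he'; rcases he' with rfl | rfl <;>
      simp [uSVH, uSVL, pT, pSVH, pSVL] <;> nlinarith [mul_pos (sub_pos.mpr hV) (by linarith : (0:ℝ) < 2 * a - 1), mul_pos hVL (by linarith : (0:ℝ) < 2 * a - 1)]
  · intro e' he'; rcases he' with rfl | rfl <;>
      simp [uSVH, uSVL, pT, pSVH, pSVL] <;> nlinarith [mul_pos (sub_pos.mpr hV) (by linarith : (0:ℝ) < 2 * a - 1), mul_pos hVL (by linarith : (0:ℝ) < 2 * a - 1)]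
  · intro e' he'; rcases he' with rfl | rfl <;>
      simp [uSVH, uSVL, pT, pSVH, pSVL] <;> nlinarith [mul_pos (sub_pos.mpr hV) (by linarith : (0:ℝ) < 2 * a - 1), mul_pos hVL (by linarith : (0:ℝ) < 2 * a - 1)]
  · intro e' he'; rcases he' with rfl | rfl <;>
      simp [uSVH, uSVL, pT, pSVH, pSVL] <;> nlinarith [mul_pos (sub_pos.mpr hV) (by linarith : (0:ℝ) < 2 * a - 1), mul_pos hVL (by linarith : (0:ℝ) < 2 * a - 1)]
  · nlinarith
end
end
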